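/- Let σ be an involutive automorphism of ℍ, extended entrywise to matrices (write X̂ for the matrix obtained by applying σ to each entry of X). The quaternion matrix equation AX - X̂B = C has a solution if and only if there exists a nonsingular quaternion matrix S such that Ŝ⁻¹·[[A, C], [0, B]]·S = [[A, 0], [0, B]]. -/

import Mathlib

open Matrix Quaternion FiniteDimensional

private lemma central_real (q : ℍ[ℝ]) (h : ∀ x : ℍ[ℝ], q * x = x * q) :
    q = (q.re : ℍ[ℝ]) := by
  have h1 := h (⟨0, 1, 0, 0⟩ : ℍ[ℝ])
  have h2 := h (⟨0, 0, 1, 0⟩ : ℍ[ℝ])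
  have hJ := congrArg QuaternionAlgebra.imJ h1
  have hK := congrArg QuaternionAlgebra.imK h1
  have hI := congrArg QuaternionAlgebra.imK h2
  erw [Quaternion.imJ_mul, Quaternion.imJ_mul] at hJ
  erw [Quaternion.imK_mul, Quaternion.imK_mul] at hK hI
  simp at hJ hK hI
  ext <;> simp <;> linarith

private lemma sigma_fixes_real (σ : ℍ[ℝ] ≃+* ℍ[ℝ]) (r : ℝ) :
    σ (r : ℍ[ℝ]) = (r : ℍ[ℝ]) := by
  have key : ∀ s : ℝ, σ (s : ℍ[ℝ]) = (((σ (s : ℍ[ℝ])).re : ℝ) : ℍ[ℝ]) := by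
    intro s
    apply central_real
    intro x
    obtain ⟨y, rfl⟩ := σ.surjective x
    rw [← _root_.map_mul, ← _root_.map_mul, Quaternion.coe_commutes]
  let f : ℝ →+* ℝ :=
  { toFun := fun s => (σ (s : ℍ[ℝ])).re
    map_one' := by simp
    map_zero' := by simp
    map_add' := fun a b => by push_cast; rw [map_add]; simp
    map_mul' := fun a b => by
      show (σ ((a*b : ℝ) : ℍ[ℝ])).re = (σ (a:ℍ[ℝ])).re * (σ (b:ℍ[ℝ])).re
      rw [Quaternion.coe_mul, _root_.map_mul, key a, key b, ← Quaternion.coe_mul,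
        Quaternion.re_coe]
      simp }
  have hf : f = RingHom.id ℝ := Subsingleton.elim _ _
  have hr : (σ (r : ℍ[ℝ])).re = r := congrArg (fun g : ℝ →+* ℝ => g r) hf
  rw [key r, hr]

section aux

variable {m n : ℕ} (σ : ℍ[ℝ] ≃+* ℍ[ℝ])

private lemma hmapmul {p q r : Type*} [Fintype q] (U : Matrix p q ℍ[ℝ])
    (V : Matrix q r ℍ[ℝ]) : (U * V).map σ = U.map σ * V.map σ :=
  Matrix.map_mul (f := σ.toRingHom)

private lemma hmap1 {p : Type*} [DecidableEq p] :
    (1 : Matrix p p ℍ[ℝ]).map σ = 1 :=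
  Matrix.map_one σ (map_zero σ) (map_one σ)

private lemma hmap0 {p q : Type*} : (0 : Matrix p q ℍ[ℝ]).map σ = 0 :=
  Matrix.map_zero σ (map_zero σ)

private lemma hmapneg {p q : Type*} (U : Matrix p q ℍ[ℝ]) :
    (-U).map σ = -(U.map σ) := by
  refine Matrix.ext fun i j => ?_
  simp [Matrix.map_apply]

end aux

set_option maxHeartbeats 1600000 in
theorem roth_quaternion_twisted {m n : ℕ} (σ : ℍ[ℝ] ≃+* ℍ[ℝ])
    (hinv : ∀ h : ℍ[ℝ], σ (σ h) = h)
    (A : Matrix (Fin m) (Fin m) ℍ[ℝ]) (B : Matrix (Fin n) (Fin n) ℍ[ℝ])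
    (C : Matrix (Fin m) (Fin n) ℍ[ℝ]) :
    (∃ X : Matrix (Fin m) (Fin n) ℍ[ℝ], A * X - X.map σ * B = C) ↔
    (∃ S : Matrix (Fin m ⊕ Fin n) (Fin m ⊕ Fin n) ℍ[ℝ], IsUnit S ∧
      fromBlocks A C 0 B * S = S.map σ * fromBlocks A 0 0 B) := by
  have hσr : ∀ (s : ℝ) (x : ℍ[ℝ]), σ (s • x) = s • σ x := by
    intro s x
    rw [← Quaternion.coe_mul_eq_smul, _root_.map_mul, sigma_fixes_real,
      Quaternion.coe_mul_eq_smul]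
  set M : Matrix (Fin m ⊕ Fin n) (Fin m ⊕ Fin n) ℍ[ℝ] := fromBlocks A C 0 B with hMdef
  set N : Matrix (Fin m ⊕ Fin n) (Fin m ⊕ Fin n) ℍ[ℝ] := fromBlocks A 0 0 B with hNdef
  constructor
  · rintro ⟨X, hX⟩
    refine ⟨fromBlocks 1 (-X) 0 1, ?_, ?_⟩
    · refine isUnit_iff_exists.2 ⟨fromBlocks 1 X 0 1, ?_, ?_⟩
      · rw [fromBlocks_multiply]
        simp [fromBlocks_one]
      · rw [fromBlocks_multiply]
        simp [fromBlocks_one]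
    · rw [hMdef, hNdef, fromBlocks_multiply, fromBlocks_map, hmap1, hmap0,
        hmapneg, fromBlocks_multiply]
      have h12 : A * (-X) + C = -(X.map ⇑σ * B) := by
        rw [Matrix.mul_neg, ← hX]
        abel
      simp only [Matrix.one_mul, Matrix.mul_one, Matrix.zero_mul, Matrix.mul_zero,
        add_zero, zero_add, Matrix.neg_mul, h12]
      rw [hmap1, Matrix.one_mul]
  · rintro ⟨S, hSu, hS⟩
    obtain ⟨u, rfl⟩ := hSu
    set U : Matrix (Fin m ⊕ Fin n) (Fin m ⊕ Fin n) ℍ[ℝ] := u.val with hUdef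
    set V : Matrix (Fin m ⊕ Fin n) (Fin m ⊕ Fin n) ℍ[ℝ] := (u⁻¹).val with hVdef
    have hUV : U * V = 1 := u.mul_inv
    have hVU : V * U = 1 := u.inv_mul
    haveI : Module.Finite ℝ (Matrix (Fin m ⊕ Fin n) (Fin m ⊕ Fin n) ℍ[ℝ]) :=
      Module.Finite.matrix
    let mσ : Matrix (Fin m ⊕ Fin n) (Fin m ⊕ Fin n) ℍ[ℝ] →ₗ[ℝ]
        Matrix (Fin m ⊕ Fin n) (Fin m ⊕ Fin n) ℍ[ℝ] :=
      { toFun := fun Z => Z.map σ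
        map_add' := fun Z W => Matrix.map_add σ (fun a b => map_add σ a b) Z W
        map_smul' := fun s Z => by
          refine Matrix.ext fun i j => ?_
          simp [Matrix.map_apply, hσr] }
    let f₁ := LinearMap.mulLeft ℝ M - (LinearMap.mulRight ℝ N).comp mσ
    let f₂ := LinearMap.mulLeft ℝ N - (LinearMap.mulRight ℝ N).comp mσ
    have mem1 : ∀ Z, Z ∈ LinearMap.ker f₁ ↔ M * Z = Z.map σ * N := fun Z => by
      simp only [f₁, LinearMap.mem_ker, LinearMap.sub_apply, LinearMap.comp_apply,
        LinearMap.mulLeft_apply, LinearMap.mulRight_apply, mσ, LinearMap.coe_mk,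
        AddHom.coe_mk, sub_eq_zero]
    have mem2 : ∀ Z, Z ∈ LinearMap.ker f₂ ↔ N * Z = Z.map σ * N := fun Z => by
      simp only [f₂, LinearMap.mem_ker, LinearMap.sub_apply, LinearMap.comp_apply,
        LinearMap.mulLeft_apply, LinearMap.mulRight_apply, mσ, LinearMap.coe_mk,
        AddHom.coe_mk, sub_eq_zero]
    let π : Matrix (Fin m ⊕ Fin n) (Fin m ⊕ Fin n) ℍ[ℝ] →ₗ[ℝ]
        Matrix (Fin n) (Fin m) ℍ[ℝ] × Matrix (Fin n) (Fin n) ℍ[ℝ] :=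
      { toFun := fun Z => (Z.toBlocks₂₁, Z.toBlocks₂₂)
        map_add' := fun Z W => rfl
        map_smul' := fun s Z => rfl }
    have πmem : ∀ Z, Z ∈ LinearMap.ker π ↔
        (Z.toBlocks₂₁ = 0 ∧ Z.toBlocks₂₂ = 0) := fun Z => by
      simp only [π, LinearMap.mem_ker, LinearMap.coe_mk, AddHom.coe_mk, Prod.mk_eq_zero]
      show (Z.toBlocks₂₁, Z.toBlocks₂₂) = 0 ↔ _
      exact Prod.mk_eq_zero
    have hσS : U.map σ * V.map σ = 1 := by
      rw [← hmapmul σ, hUV, hmap1]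
    have hσS' : V.map σ * U.map σ = 1 := by
      rw [← hmapmul σ, hVU, hmap1]
    have hS' : N * V = V.map σ * M := by
      calc N * V = (V.map σ * U.map σ) * N * V := by rw [hσS', one_mul]
        _ = V.map σ * (U.map σ * N) * V := by rw [mul_assoc (V.map σ)]
        _ = V.map σ * (M * U) * V := by rw [hS]
        _ = V.map σ * M * (U * V) := by simp only [mul_assoc]
        _ = V.map σ * M := by rw [hUV, mul_one]
    let e : LinearMap.ker f₂ ≃ₗ[ℝ] LinearMap.ker f₁ :=
      { toFun := fun Z => ⟨U * Z.1, by
          rw [mem1]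
          have hZ := (mem2 _).1 Z.2
          rw [← mul_assoc, hS, mul_assoc, hZ, ← mul_assoc, ← hmapmul σ]⟩
        invFun := fun Z => ⟨V * Z.1, by
          rw [mem2]
          have hZ := (mem1 _).1 Z.2
          rw [← mul_assoc, hS', mul_assoc, hZ, ← mul_assoc, ← hmapmul σ]⟩
        map_add' := fun Z W => Subtype.ext (mul_add _ _ _)
        map_smul' := fun s Z => Subtype.ext (by simp [Matrix.mul_smul])
        left_inv := fun Z => Subtype.ext (by
          show V * (U * Z.1) = Z.1
          rw [← mul_assoc, hVU, one_mul])
        right_inv := fun Z => Subtype.ext (by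
          show U * (V * Z.1) = Z.1
          rw [← mul_assoc, hUV, one_mul]) }
    have hMN : ∀ Z : Matrix (Fin m ⊕ Fin n) (Fin m ⊕ Fin n) ℍ[ℝ],
        Z.toBlocks₂₁ = 0 → Z.toBlocks₂₂ = 0 → M * Z = N * Z := by
      intro Z h1 h2
      rw [← fromBlocks_toBlocks Z, h1, h2, hMdef, hNdef, fromBlocks_multiply,
        fromBlocks_multiply]
      simp
    have hinf : (LinearMap.ker π ⊓ LinearMap.ker f₁ :
        Submodule ℝ (Matrix (Fin m ⊕ Fin n) (Fin m ⊕ Fin n) ℍ[ℝ])) =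
        LinearMap.ker π ⊓ LinearMap.ker f₂ := by
      ext Z
      simp only [Submodule.mem_inf]
      constructor
      · rintro ⟨hπ0, hf⟩
        obtain ⟨h1, h2⟩ := (πmem Z).1 hπ0
        refine ⟨hπ0, ?_⟩
        rw [mem2, ← hMN Z h1 h2, ← mem1]
        exact hf
      · rintro ⟨hπ0, hf⟩
        obtain ⟨h1, h2⟩ := (πmem Z).1 hπ0
        refine ⟨hπ0, ?_⟩
        rw [mem1, hMN Z h1 h2, ← mem2]
        exact hf
    have hk : ∀ g : Matrix (Fin m ⊕ Fin n) (Fin m ⊕ Fin n) ℍ[ℝ] →ₗ[ℝ]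
        Matrix (Fin m ⊕ Fin n) (Fin m ⊕ Fin n) ℍ[ℝ],
        Module.finrank ℝ (LinearMap.ker (π.domRestrict (LinearMap.ker g))) =
        Module.finrank ℝ ((LinearMap.ker π ⊓ LinearMap.ker g :
          Submodule ℝ (Matrix (Fin m ⊕ Fin n) (Fin m ⊕ Fin n) ℍ[ℝ]))) := by
      intro g
      rw [LinearMap.ker_domRestrict]
      have h1 : Submodule.comap (LinearMap.ker g).subtype (LinearMap.ker π) =
          Submodule.comap (LinearMap.ker g).subtype
            (LinearMap.ker π ⊓ LinearMap.ker g) := by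
        rw [Submodule.comap_inf, Submodule.comap_subtype_self, inf_top_eq]
      rw [h1]
      exact (Submodule.comapSubtypeEquivOfLe inf_le_right).finrank_eq
    have hr1 := LinearMap.finrank_range_add_finrank_ker (π.domRestrict (LinearMap.ker f₁))
    have hr2 := LinearMap.finrank_range_add_finrank_ker (π.domRestrict (LinearMap.ker f₂))
    rw [LinearMap.range_domRestrict, hk f₁, hinf] at hr1
    rw [LinearMap.range_domRestrict, hk f₂] at hr2
    have hW : Module.finrank ℝ (LinearMap.ker f₂) = Module.finrank ℝ (LinearMap.ker f₁) :=
      e.finrank_eq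
    have hsub : Submodule.map π (LinearMap.ker f₁) ≤ Submodule.map π (LinearMap.ker f₂) := by
      rintro x ⟨Z, hZ, rfl⟩
      have hZ' := (mem1 Z).1 hZ
      rw [← fromBlocks_toBlocks Z, hMdef, hNdef, fromBlocks_map, fromBlocks_multiply,
        fromBlocks_multiply] at hZ'
      simp only [Matrix.zero_mul, Matrix.mul_zero, add_zero, zero_add] at hZ'
      rw [fromBlocks_inj] at hZ'
      obtain ⟨h11, h12, h21, h22⟩ := hZ'
      refine ⟨fromBlocks 0 0 Z.toBlocks₂₁ Z.toBlocks₂₂, (mem2 _).2 ?_, ?_⟩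
      · rw [hNdef, fromBlocks_map, fromBlocks_multiply, fromBlocks_multiply]
        simp only [hmap0 σ, Matrix.zero_mul, Matrix.mul_zero, add_zero, zero_add]
        rw [h21, h22]
      · show (_, _) = π Z
        rw [toBlocks_fromBlocks₂₁, toBlocks_fromBlocks₂₂]
        rfl
    have hmapeq : Module.finrank ℝ (Submodule.map π (LinearMap.ker f₁)) =
        Module.finrank ℝ (Submodule.map π (LinearMap.ker f₂)) := by omega
    have heq := Submodule.eq_of_le_of_finrank_eq hsub hmapeq
    have h01 : ((0, 1) : Matrix (Fin n) (Fin m) ℍ[ℝ] × Matrix (Fin n) (Fin n) ℍ[ℝ]) ∈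
        Submodule.map π (LinearMap.ker f₂) := by
      refine ⟨fromBlocks 0 0 0 1, (mem2 _).2 ?_, ?_⟩
      · rw [hNdef, fromBlocks_map, fromBlocks_multiply, fromBlocks_multiply]
        simp only [hmap0 σ, hmap1 σ, Matrix.zero_mul, Matrix.mul_zero, add_zero,
          zero_add, Matrix.one_mul, Matrix.mul_one]
      · show (_, _) = _
        rw [toBlocks_fromBlocks₂₁, toBlocks_fromBlocks₂₂]
    rw [← heq] at h01
    obtain ⟨Z, hZ, hπZ⟩ := h01
    have h21 : Z.toBlocks₂₁ = 0 := congrArg Prod.fst hπZ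
    have h22 : Z.toBlocks₂₂ = 1 := congrArg Prod.snd hπZ
    have hZ' := (mem1 Z).1 hZ
    rw [← fromBlocks_toBlocks Z, h21, h22, hMdef, hNdef, fromBlocks_map,
      fromBlocks_multiply, fromBlocks_multiply] at hZ'
    simp only [hmap0 σ, hmap1 σ, Matrix.zero_mul, Matrix.mul_zero, add_zero,
      zero_add, Matrix.one_mul, Matrix.mul_one] at hZ'
    rw [fromBlocks_inj] at hZ'
    obtain ⟨-, h12, -, -⟩ := hZ'
    exact ⟨-Z.toBlocks₁₂, by
      rw [Matrix.mul_neg, hmapneg σ, Matrix.neg_mul, ← h12]; abel⟩
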